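/- Let n ≥ 2 and let P be the n×n matrix of the complete graph, with p_{jk} = 1/(n−1) for j ≠ k and p_{jj} = 0. Then for every subset I of {1,…,n}: Σ_{k∈I, j∉I} p_{jk} = |I|·(n−|I|)/(n−1). Consequently, for reals z > 0, r > 0 and nonempty I, the expected one-step change (z/n)·(2·|I|·(n−|I|)/(n−1)) − r·|I| equals zero if and only if |I|/n = 1 − r(n−1)/(2z). Hence the quasi-stationary density of infected nodes of the single infection epidemic spreading model on the complete graph is i_s = 1 − r(n−1)/(2z). -/

import Mathlib

/-- On the complete graph (where `p_{jk} = 1/(n-1)` off the diagonal and `0` on it),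
for every set `I` of infected nodes `∑_{k∈I, j∉I} p_{jk} = |I|(n-|I|)/(n-1)`, and
consequently for `z, r > 0` the expected one-step change of the number of infected nodes
vanishes exactly at the quasi-stationary density `|I|/n = 1 - r(n-1)/(2z)`. -/
theorem siesm_complete_graph_quasi_stationary (n : ℕ) (hn : 2 ≤ n)
    (P : Matrix (Fin n) (Fin n) ℝ)
    (hP : ∀ j k, P j k = if j = k then 0 else 1 / ((n : ℝ) - 1)) :
    (∀ I : Finset (Fin n),
        ∑ k ∈ I, ∑ j ∈ Iᶜ, P j k = (I.card : ℝ) * ((n : ℝ) - I.card) / ((n : ℝ) - 1)) ∧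
      (∀ z r : ℝ, 0 < z → 0 < r → ∀ I : Finset (Fin n), I.Nonempty →
        ((z / n) * (2 * (I.card : ℝ) * ((n : ℝ) - I.card) / ((n : ℝ) - 1))
            - r * I.card = 0 ↔
          (I.card : ℝ) / n = 1 - r * ((n : ℝ) - 1) / (2 * z))) := by
  have hn1 : (1 : ℝ) ≤ (n : ℝ) - 1 := by
    have : (2 : ℝ) ≤ n := by exact_mod_cast hn
    linarith
  have hne : ((n : ℝ) - 1) ≠ 0 := by linarith
  have hnpos : (0 : ℝ) < n := by
    have : (2 : ℝ) ≤ n := by exact_mod_cast hn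
    linarith
  constructor
  · intro I
    have : ∑ k ∈ I, ∑ j ∈ Iᶜ, P j k
        = ∑ k ∈ I, ∑ j ∈ Iᶜ, (1 / ((n : ℝ) - 1)) := by
      refine Finset.sum_congr rfl fun k hk => Finset.sum_congr rfl fun j hj => ?_
      rw [hP]
      have : j ≠ k := fun h => (Finset.mem_compl.mp hj) (h ▸ hk)
      simp [this]
    rw [this]
    simp only [Finset.sum_const, nsmul_eq_mul]
    have hle : I.card ≤ n := by simpa using Finset.card_le_univ I
    have hcard : (Iᶜ.card : ℝ) = (n : ℝ) - I.card := by
      rw [Finset.card_compl, Fintype.card_fin, Nat.cast_sub hle]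
    rw [hcard]
    ring
  · intro z r hz hr I hI
    have hc : (0 : ℝ) < I.card := by exact_mod_cast Finset.card_pos.mpr hI
    rw [div_eq_iff hnpos.ne', eq_comm]
    constructor
    · intro h
      have h2 : z * (2 * (I.card : ℝ) * ((n : ℝ) - I.card)) = r * I.card * n * ((n:ℝ)-1) := by
        field_simp at h
        linarith
      have := mul_left_cancel₀ (mul_pos (by norm_num : (0:ℝ) < 2) hc).ne'
        (show 2 * (I.card : ℝ) * (z * ((n:ℝ) - I.card)) = 2 * I.card * (r * n * ((n:ℝ)-1) / 2) by
          rw [mul_div_assoc]; field_simp; ring_nf; ring_nf at h2; exact mul_left_cancel₀ hc.ne' (by linear_combination h2))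
      field_simp
      nlinarith [this]
    · intro h
      have : z * ((n:ℝ) - I.card) = r * n * ((n:ℝ)-1) / 2 := by
        field_simp at h ⊢
        nlinarith [h]
      field_simp
      nlinarith [this, hc]
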